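/- (One-dimensional Gagliardo–Nirenberg inequality.) For every real p > 1 there exists a constant C(p) > 0 such that for every continuously differentiable function v : ℝ → ℝ with ∫_ℝ v(x)² dx < ∞ and ∫_ℝ v'(x)² dx < ∞, one has ∫_ℝ |v(x)|^{p+1} dx ≤ C(p) · ( ∫_ℝ v(x)² dx )^{(p+3)/4} · ( ∫_ℝ v'(x)² dx )^{(p−1)/4}. -/

import Mathlib

open MeasureTheory

/-- Sup bound: for C¹ `v` with `v²` integrable and `2 v v'` integrable,
`v x ^ 2 ≤ ∫ |2 v v'|`. -/
lemma sq_le_integral_abs (v : ℝ → ℝ) (hv : ContDiff ℝ 1 v)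
    (hv2 : Integrable (fun x => v x ^ 2))
    (hg : Integrable (fun x => 2 * v x * deriv v x)) (x : ℝ) :
    v x ^ 2 ≤ ∫ y : ℝ, |2 * v y * deriv v y| := by
  set g : ℝ → ℝ := fun y => 2 * v y * deriv v y with hgdef
  set M : ℝ := ∫ y : ℝ, |g y| with hM
  have hgabs : Integrable (fun y => |g y|) := hg.abs
  have key : ∀ y : ℝ, v x ^ 2 ≤ v y ^ 2 + M := by
    intro y
    have hderiv : ∀ t ∈ Set.uIcc y x, HasDerivAt (fun s => v s ^ 2) (g t) t := by
      intro t _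
      have h1 : HasDerivAt v (deriv v t) t :=
        ((hv.differentiable one_ne_zero) t).hasDerivAt
      have := h1.fun_pow 2
      simpa [g, pow_one, mul_comm, mul_assoc, mul_left_comm] using this
    have hint : IntervalIntegrable g volume y x := hg.intervalIntegrable
    have hftc : ∫ t in y..x, g t = v x ^ 2 - v y ^ 2 :=
      intervalIntegral.integral_eq_sub_of_hasDerivAt hderiv hint
    have h1 : |v x ^ 2 - v y ^ 2| ≤ ∫ t in Set.uIoc y x, |g t| := by
      rw [← hftc]
      simpa [Real.norm_eq_abs] using
        (intervalIntegral.norm_integral_le_integral_norm_uIoc (f := g) (a := y) (b := x)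
          (μ := volume))
    have h2 : ∫ t in Set.uIoc y x, |g t| ≤ M :=
      setIntegral_le_integral hgabs (Filter.Eventually.of_forall fun t => abs_nonneg _)
    have := (abs_le.mp (h1.trans h2)).2
    linarith
  by_contra hcon
  push_neg at hcon
  set ε : ℝ := v x ^ 2 - M with hε
  have hεpos : 0 < ε := by simp only [hε]; linarith
  have hall : ∀ y : ℝ, ε ≤ v y ^ 2 := by
    intro y
    have := key y
    simp only [hε]; linarith
  have : Integrable (fun _ : ℝ => ε) := by
    refine hv2.mono' aestronglyMeasurable_const ?_
    refine Filter.Eventually.of_forall fun y => ?_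
    rw [Real.norm_eq_abs, abs_of_pos hεpos]
    exact hall y
  rw [integrable_const_iff] at this
  rcases this with h | h
  · exact absurd h (ne_of_gt hεpos)
  · exact absurd (measure_lt_top (volume : Measure ℝ) Set.univ) (by simp)

/-- One-dimensional Gagliardo–Nirenberg inequality: for `p > 1`,
`∫ |v|^{p+1} ≤ C(p) (∫ v²)^{(p+3)/4} (∫ (v')²)^{(p-1)/4}`. -/
theorem gagliardo_nirenberg_one_dim (p : ℝ) (hp : 1 < p) :
    ∃ C : ℝ, 0 < C ∧
      ∀ v : ℝ → ℝ, ContDiff ℝ 1 v →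
        Integrable (fun x => v x ^ 2) → Integrable (fun x => deriv v x ^ 2) →
        (∫ x : ℝ, |v x| ^ (p + 1)) ≤
          C * (∫ x : ℝ, v x ^ 2) ^ ((p + 3) / 4) * (∫ x : ℝ, deriv v x ^ 2) ^ ((p - 1) / 4) := by
  refine ⟨2 ^ ((p - 1) / 2), by positivity, ?_⟩
  intro v hv hv2 hv'2
  set A : ℝ := ∫ x : ℝ, v x ^ 2 with hA
  set B : ℝ := ∫ x : ℝ, deriv v x ^ 2 with hB
  have hA0 : 0 ≤ A := integral_nonneg fun x => sq_nonneg _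
  have hB0 : 0 ≤ B := integral_nonneg fun x => sq_nonneg _
  have hvc : Continuous v := hv.continuous
  have hv'c : Continuous (deriv v) := hv.continuous_deriv le_rfl
  have hmul : Integrable (fun x => v x * deriv v x) := by
    refine ((hv2.add hv'2).div_const 2).mono'
      (hvc.mul hv'c).aestronglyMeasurable ?_
    refine Filter.Eventually.of_forall fun x => ?_
    rw [Real.norm_eq_abs, abs_mul]
    simp only [Pi.add_apply]
    nlinarith [sq_nonneg (|v x| - |deriv v x|), sq_abs (v x), sq_abs (deriv v x),
      abs_nonneg (v x), abs_nonneg (deriv v x)]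
  have hg : Integrable (fun x => 2 * v x * deriv v x) := by
    simpa [mul_assoc] using hmul.const_mul 2
  have hvL2 : MemLp v 2 volume :=
    (memLp_two_iff_integrable_sq hvc.aestronglyMeasurable).mpr hv2
  have hv'L2 : MemLp (deriv v) 2 volume :=
    (memLp_two_iff_integrable_sq hv'c.aestronglyMeasurable).mpr hv'2
  have hCS : (∫ x : ℝ, |v x| * |deriv v x|) ≤ A ^ ((1:ℝ)/2) * B ^ ((1:ℝ)/2) := by
    have hconj : Real.HolderConjugate 2 2 := Real.HolderConjugate.two_two
    have h2 : (ENNReal.ofReal (2:ℝ)) = 2 := by simp [ENNReal.ofReal_ofNat]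
    have habs : MemLp (fun x => |v x|) (ENNReal.ofReal (2:ℝ)) volume := by
      rw [h2]; simpa [Real.norm_eq_abs] using hvL2.norm
    have habs' : MemLp (fun x => |deriv v x|) (ENNReal.ofReal (2:ℝ)) volume := by
      rw [h2]; simpa [Real.norm_eq_abs] using hv'L2.norm
    have h := integral_mul_le_Lp_mul_Lq_of_nonneg hconj
      (Filter.Eventually.of_forall fun x => abs_nonneg (v x))
      (Filter.Eventually.of_forall fun x => abs_nonneg (deriv v x))
      habs habs'
    have e1 : (∫ x : ℝ, |v x| ^ (2:ℝ)) = A := by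
      rw [hA]; congr 1; funext x
      rw [show ((2:ℝ)) = ((2:ℕ):ℝ) by norm_num, Real.rpow_natCast, sq_abs]
    have e2 : (∫ x : ℝ, |deriv v x| ^ (2:ℝ)) = B := by
      rw [hB]; congr 1; funext x
      rw [show ((2:ℝ)) = ((2:ℕ):ℝ) by norm_num, Real.rpow_natCast, sq_abs]
    rw [e1, e2] at h
    exact h
  have hMpt : ∀ x : ℝ, v x ^ 2 ≤ 2 * (A ^ ((1:ℝ)/2) * B ^ ((1:ℝ)/2)) := by
    intro x
    refine (sq_le_integral_abs v hv hv2 hg x).trans ?_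
    have heq : (∫ y : ℝ, |2 * v y * deriv v y|) = 2 * ∫ y : ℝ, |v y| * |deriv v y| := by
      rw [← integral_const_mul]
      congr 1; funext y
      rw [abs_mul, abs_mul, abs_two]; ring
    rw [heq]
    linarith [hCS]
  set M : ℝ := 2 * (A ^ ((1:ℝ)/2) * B ^ ((1:ℝ)/2)) with hMdef
  have hM0 : 0 ≤ M := by positivity
  have hpexp : (0:ℝ) ≤ (p - 1) / 2 := by linarith
  have hpt : ∀ x : ℝ, |v x| ^ (p + 1) ≤ M ^ ((p - 1) / 2) * v x ^ 2 := by
    intro x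
    have hvx2 : v x ^ 2 ≤ M := hMpt x
    have habs : |v x| ^ (p + 1) = (v x ^ 2) ^ ((p - 1) / 2) * v x ^ 2 := by
      have e0 : |v x| ^ (p + 1) = (|v x| ^ (2:ℕ)) ^ ((p + 1) / 2) := by
        rw [← Real.rpow_natCast (|v x|) 2, ← Real.rpow_mul (abs_nonneg _)]
        congr 1; norm_num; ring
      rw [e0, sq_abs]
      have e1 : (p + 1) / 2 = (p - 1) / 2 + 1 := by ring
      rw [e1, Real.rpow_add' (sq_nonneg _)
        (ne_of_gt (by linarith : (0:ℝ) < (p - 1) / 2 + 1)), Real.rpow_one]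
    rw [habs]
    have h1 : (v x ^ 2) ^ ((p - 1) / 2) ≤ M ^ ((p - 1) / 2) :=
      Real.rpow_le_rpow (sq_nonneg _) hvx2 hpexp
    exact mul_le_mul_of_nonneg_right h1 (sq_nonneg _)
  -- integrability of LHS
  have hlhsm : AEStronglyMeasurable (fun x => |v x| ^ (p + 1)) volume := by
    apply Continuous.aestronglyMeasurable
    exact hvc.abs.rpow_const fun x => Or.inr (by linarith)
  have hrhs : Integrable (fun x => M ^ ((p - 1) / 2) * v x ^ 2) := hv2.const_mul _
  have hlhsi : Integrable (fun x => |v x| ^ (p + 1)) := by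
    refine hrhs.mono' hlhsm ?_
    refine Filter.Eventually.of_forall fun x => ?_
    rw [Real.norm_eq_abs, abs_of_nonneg (Real.rpow_nonneg (abs_nonneg _) _)]
    exact hpt x
  have hint : (∫ x : ℝ, |v x| ^ (p + 1)) ≤ ∫ x : ℝ, M ^ ((p - 1) / 2) * v x ^ 2 :=
    integral_mono hlhsi hrhs hpt
  rw [integral_const_mul] at hint
  refine hint.trans ?_
  rw [← hA]
  -- algebra: M^((p-1)/2) * A = 2^((p-1)/2) * A^((p+3)/4) * B^((p-1)/4)
  have expand : M ^ ((p - 1) / 2) =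
      2 ^ ((p - 1) / 2) * A ^ ((p - 1) / 4) * B ^ ((p - 1) / 4) := by
    rw [hMdef, Real.mul_rpow (by norm_num) (by positivity),
      Real.mul_rpow (by positivity) (by positivity),
      ← Real.rpow_mul hA0, ← Real.rpow_mul hB0]
    ring_nf
  rw [expand]
  have eA : A ^ ((p - 1) / 4) * A = A ^ ((p + 3) / 4) := by
    nth_rewrite 2 [← Real.rpow_one A]
    rw [← Real.rpow_add' hA0 (ne_of_gt (by linarith : (0:ℝ) < (p - 1) / 4 + 1))]
    congr 1; ring
  refine le_of_eq ?_
  rw [← eA]; ring
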